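/- The function h is Lipschitz continuous on [0, b] with Lipschitz constant maxᵢ ĥᵢ μᵢ: for all x, y ∈ [0, b], |h(x) − h(y)| ≤ (maxᵢ ĥᵢ μᵢ) · |x − y|. -/

import Mathlib

/-- Lipschitz continuity of the effective holding cost `h` of (3.19a) of the
paper on `[0, b]`, with Lipschitz constant `maxᵢ ĥᵢ μᵢ`. -/
theorem effective_holding_cost_lipschitz
    (I : ℕ) (hI : 1 ≤ I)
    (hcost μ bcap : Fin I → ℝ)
    (hhpos : ∀ i, 0 < hcost i) (hμpos : ∀ i, 0 < μ i) (hbpos : ∀ i, 0 < bcap i)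
    (b : ℝ) (hb : b = ∑ i, bcap i / μ i)
    (h : ℝ → ℝ)
    (hdef : ∀ x : ℝ, h x = sInf {y : ℝ | ∃ ξ : Fin I → ℝ,
      (∀ i, ξ i ∈ Set.Icc 0 (bcap i)) ∧ (∑ i, ξ i / μ i) = x ∧
      y = ∑ i, hcost i * ξ i}) :
    ∀ x ∈ Set.Icc (0:ℝ) b, ∀ y ∈ Set.Icc (0:ℝ) b,
      |h x - h y| ≤
        (Finset.univ.sup'
          (Finset.univ_nonempty_iff.mpr (Fin.pos_iff_nonempty.mp hI))
          (fun i => hcost i * μ i)) * |x - y| := by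
  have hne : (Finset.univ : Finset (Fin I)).Nonempty :=
    Finset.univ_nonempty_iff.mpr (Fin.pos_iff_nonempty.mp hI)
  set K := Finset.univ.sup' hne (fun i => hcost i * μ i) with hKdef
  have hKle : ∀ i, hcost i * μ i ≤ K := fun i => by exact Finset.le_sup' (fun j => hcost j * μ j) (Finset.mem_univ i)
  have hK0 : 0 ≤ K := le_trans (le_of_lt (mul_pos (hhpos ⟨0, hI⟩) (hμpos ⟨0, hI⟩))) (hKle _)
  set S : ℝ → Set ℝ := fun x => {y : ℝ | ∃ ξ : Fin I → ℝ,
      (∀ i, ξ i ∈ Set.Icc 0 (bcap i)) ∧ (∑ i, ξ i / μ i) = x ∧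
      y = ∑ i, hcost i * ξ i} with hS
  have hbpos' : 0 < b := by
    rw [hb]
    exact Finset.sum_pos (fun i _ => div_pos (hbpos i) (hμpos i)) hne
  have hbdd : ∀ w : ℝ, BddBelow (S w) := by
    intro w
    refine ⟨0, ?_⟩
    rintro c ⟨ξ, hξ, -, rfl⟩
    exact Finset.sum_nonneg fun i _ => mul_nonneg (le_of_lt (hhpos i)) (hξ i).1
  have hnonempty : ∀ w : ℝ, 0 ≤ w → w ≤ b → (S w).Nonempty := by
    intro w hw hwb
    refine ⟨∑ i, hcost i * ((w / b) * bcap i), fun i => (w / b) * bcap i, ?_, ?_, rfl⟩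
    · intro i
      have h01 : 0 ≤ w / b := div_nonneg hw (le_of_lt hbpos')
      have h1 : w / b ≤ 1 := (div_le_one hbpos').mpr hwb
      exact ⟨mul_nonneg h01 (le_of_lt (hbpos i)),
        mul_le_of_le_one_left (le_of_lt (hbpos i)) h1⟩
    · have : ∀ i : Fin I, (w / b) * bcap i / μ i = (w / b) * (bcap i / μ i) := by
        intro i; rw [mul_div_assoc]
      rw [Finset.sum_congr rfl (fun i _ => this i), ← Finset.mul_sum, ← hb,
        div_mul_cancel₀ _ (ne_of_gt hbpos')]
  -- key lemma
  have key : ∀ u v : ℝ, 0 ≤ u → u ≤ v → v ≤ b → h u ≤ h v ∧ h v ≤ h u + K * (v - u) := by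
    intro u v hu huv hvb
    have hu' : u ≤ b := le_trans huv hvb
    have hv0 : 0 ≤ v := le_trans hu huv
    constructor
    · -- h u ≤ h v
      rw [hdef u, hdef v]
      refine le_csInf (hnonempty v hv0 hvb) ?_
      rintro c ⟨ξ, hξ, hsum, rfl⟩
      have hc0 : 0 ≤ ∑ i, hcost i * ξ i :=
        Finset.sum_nonneg fun i _ => mul_nonneg (le_of_lt (hhpos i)) (hξ i).1
      by_cases hveq : v = 0
      · have : u = 0 := le_antisymm (hveq ▸ huv) hu
        exact csInf_le (hbdd u) ⟨ξ, hξ, by rw [hsum, hveq, this], rfl⟩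
      · have hvpos : 0 < v := lt_of_le_of_ne hv0 (Ne.symm hveq)
        set s := u / v with hs
        have hs0 : 0 ≤ s := div_nonneg hu (le_of_lt hvpos)
        have hs1 : s ≤ 1 := (div_le_one hvpos).mpr huv
        have hmem : (∑ i, hcost i * (s * ξ i)) ∈ S u := by
          refine ⟨fun i => s * ξ i, ?_, ?_, rfl⟩
          · intro i
            exact ⟨mul_nonneg hs0 (hξ i).1,
              le_trans (mul_le_of_le_one_left (hξ i).1 hs1) (hξ i).2⟩
          · have : ∀ i : Fin I, s * ξ i / μ i = s * (ξ i / μ i) := fun i => mul_div_assoc _ _ _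
            rw [Finset.sum_congr rfl (fun i _ => this i), ← Finset.mul_sum, hsum, hs,
              div_mul_cancel₀ _ (ne_of_gt hvpos)]
        calc sInf (S u) ≤ ∑ i, hcost i * (s * ξ i) := csInf_le (hbdd u) hmem
          _ = s * ∑ i, hcost i * ξ i := by rw [Finset.mul_sum]; congr 1; ext i; ring
          _ ≤ 1 * ∑ i, hcost i * ξ i := mul_le_mul_of_nonneg_right hs1 hc0
          _ = ∑ i, hcost i * ξ i := one_mul _
    · -- h v ≤ h u + K * (v - u)
      rw [hdef u, hdef v]
      have : sInf (S v) - K * (v - u) ≤ sInf (S u) := by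
        refine le_csInf (hnonempty u hu hu') ?_
        rintro c ⟨ξ, hξ, hsum, rfl⟩
        by_cases huv' : u = v
        · have : sInf (S v) ≤ ∑ i, hcost i * ξ i :=
            csInf_le (hbdd v) ⟨ξ, hξ, by rw [hsum, huv'], rfl⟩
          nlinarith
        · have hulv : u < v := lt_of_le_of_ne huv huv'
          have hub : u < b := lt_of_lt_of_le hulv hvb
          set t := (v - u) / (b - u) with ht
          have hbu : b - u ≠ 0 := ne_of_gt (by linarith)
          have ht0 : 0 ≤ t := div_nonneg (by linarith) (by linarith)
          have ht1 : t ≤ 1 := (div_le_one (by linarith)).mpr (by linarith)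
          set ξ' : Fin I → ℝ := fun i => ξ i + t * (bcap i - ξ i) with hξ'
          have hrest : (∑ i, (bcap i - ξ i) / μ i) = b - u := by
            have : ∀ i : Fin I, (bcap i - ξ i) / μ i = bcap i / μ i - ξ i / μ i :=
              fun i => sub_div _ _ _
            rw [Finset.sum_congr rfl (fun i _ => this i), Finset.sum_sub_distrib, ← hb, hsum]
          have hmem : (∑ i, hcost i * ξ' i) ∈ S v := by
            refine ⟨ξ', ?_, ?_, rfl⟩
            · intro i
              have h1 := (hξ i).1
              have h2 := (hξ i).2
              constructor
              · have : 0 ≤ t * (bcap i - ξ i) := mul_nonneg ht0 (by linarith)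
                simp only [hξ']; linarith
              · simp only [hξ']; nlinarith
            · have : ∀ i : Fin I, ξ' i / μ i = ξ i / μ i + t * ((bcap i - ξ i) / μ i) := by
                intro i
                simp only [hξ']
                rw [add_div, mul_div_assoc]
              rw [Finset.sum_congr rfl (fun i _ => this i), Finset.sum_add_distrib,
                ← Finset.mul_sum, hrest, hsum, ht]
              field_simp
              ring
          have hcostb : (∑ i, hcost i * ξ' i) ≤ (∑ i, hcost i * ξ i) + K * (v - u) := by
            have hterm : ∀ i : Fin I,
                hcost i * ξ' i ≤ hcost i * ξ i + K * ((bcap i - ξ i) / μ i) * t := by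
              intro i
              have hμ := hμpos i
              have hr0 : 0 ≤ (bcap i - ξ i) / μ i :=
                div_nonneg (by have := (hξ i).2; linarith) (le_of_lt hμ)
              have heq : hcost i * (bcap i - ξ i) = hcost i * μ i * ((bcap i - ξ i) / μ i) := by
                field_simp
              have hle : hcost i * (bcap i - ξ i) ≤ K * ((bcap i - ξ i) / μ i) := by
                rw [heq]
                exact mul_le_mul_of_nonneg_right (hKle i) hr0
              simp only [hξ']
              nlinarith
            calc (∑ i, hcost i * ξ' i)
                ≤ ∑ i, (hcost i * ξ i + K * ((bcap i - ξ i) / μ i) * t) :=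
                  Finset.sum_le_sum (fun i _ => hterm i)
              _ = (∑ i, hcost i * ξ i) + (∑ i, K * ((bcap i - ξ i) / μ i) * t) := by
                  rw [Finset.sum_add_distrib]
              _ = (∑ i, hcost i * ξ i) + K * (b - u) * t := by
                  congr 1
                  have : ∀ i : Fin I, K * ((bcap i - ξ i) / μ i) * t
                      = K * t * ((bcap i - ξ i) / μ i) := fun i => by ring
                  rw [Finset.sum_congr rfl (fun i _ => this i), ← Finset.mul_sum, hrest]
                  ring
              _ = (∑ i, hcost i * ξ i) + K * (v - u) := by
                  rw [ht]
                  field_simp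
            
          have hle : sInf (S v) ≤ (∑ i, hcost i * ξ i) + K * (v - u) :=
            le_trans (csInf_le (hbdd v) hmem) hcostb
          linarith
      linarith
  intro x hx y hy
  rcases le_total x y with hxy | hyx
  · obtain ⟨h1, h2⟩ := key x y hx.1 hxy hy.2
    rw [abs_of_nonpos (by linarith : h x - h y ≤ 0), abs_of_nonpos (by linarith : x - y ≤ 0)]
    have : K * -(x - y) = K * (y - x) := by ring
    rw [this]; linarith
  · obtain ⟨h1, h2⟩ := key y x hy.1 hyx hx.2
    rw [abs_of_nonneg (by linarith : 0 ≤ h x - h y), abs_of_nonneg (by linarith : 0 ≤ x - y)]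
    linarith
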